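/- Let f be an m-layer neural network with weights W^(k) ∈ ℝ^{n_k×n_{k-1}}, biases b^(k) ∈ ℝ^{n_k}, and activation σ : ℝ → ℝ applied coordinatewise, i.e. Φ_0(x) = x, Φ_k(x) = σ(W^(k) Φ_{k-1}(x) + b^(k)) for 1 ≤ k ≤ m−1, and f(x) = W^(m) Φ_{m-1}(x) + b^(m). Fix x₀ ∈ ℝ^{n₀}, p ≥ 1, ε > 0. Suppose that for every layer k ∈ {1,…,m−1} and neuron r ∈ {1,…,n_k} there are reals l^(k)_r ≤ u^(k)_r such that l^(k)_r ≤ (W^(k) Φ_{k-1}(x) + b^(k))_r ≤ u^(k)_r for all x with ‖x − x₀‖_p ≤ ε, and there are reals α^(k)_{U,r} ≥ 0, α^(k)_{L,r} ≥ 0, β^(k)_{U,r}, β^(k)_{L,r} such that α^(k)_{L,r}(y + β^(k)_{L,r}) ≤ σ(y) ≤ α^(k)_{U,r}(y + β^(k)_{U,r}) for all y ∈ [l^(k)_r, u^(k)_r]. For each output index j define row vectors recursively: Λ^(m)_{j,:} = e_jᵀ (the j-th standard unit vector), and for k from m down to 1, Λ^(k-1)_{j,i} = (Λ^(k)_{j,:}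 W^(k))_i · λ^(k-1)_{j,i}, where for 1 ≤ k ≤ m−1, λ^(k)_{j,i} = α^(k)_{U,i} if Λ^(k+1)_{j,:} W^(k+1)_{:,i} ≥ 0 and λ^(k)_{j,i} = α^(k)_{L,i} otherwise, and λ^(0)_{j,i} = 1; also define Δ^(k)_{i,j} = β^(k)_{U,i} if Λ^(k+1)_{j,:} W^(k+1)_{:,i} ≥ 0 and Δ^(k)_{i,j} = β^(k)_{L,i} otherwise (for 1 ≤ k ≤ m−1), with Δ^(m)_{i,j} = 0. Analogously define Ω^(m)_{j,:} = e_jᵀ, Ω^(k-1)_{j,i} = (Ω^(k)_{j,:} W^(k))_i · ω^(k-1)_{j,i} with ω^(k)_{j,i} = α^(k)_{L,i} if Ω^(k+1)_{j,:} W^(k+1)_{:,i} ≥ 0 and α^(k)_{U,i} otherwise, ω^(0)_{j,i} = 1, and Θ^(k)_{i,j} = β^(k)_{L,i} if Ω^(k+1)_{j,:} W^(k+1)_{:,i} ≥ 0 and β^(k)_{U,i} otherwise, Θ^(m)_{i,j} = 0. Then for every j and every x with ‖x − x₀‖_p ≤ ε: Ω^(0)_{j,:} x + Σ_{k=1}^{m}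 Ω^(k)_{j,:}(b^(k) + Θ^(k)_{:,j}) ≤ f_j(x) ≤ Λ^(0)_{j,:} x + Σ_{k=1}^{m} Λ^(k)_{j,:}(b^(k) + Δ^(k)_{:,j}). -/

import Mathlib

open Matrix Finset
open scoped ENNReal

lemma crown_sum_mulVec {a c : ℕ} (M : Matrix (Fin a) (Fin c) ℝ) (v : Fin a → ℝ)
    (w : Fin c → ℝ) :
    ∑ r, v r * (M.mulVec w) r = ∑ i, (∑ r, v r * M r i) * w i := by
  simp only [Matrix.mulVec, dotProduct, Finset.mul_sum, Finset.sum_mul, mul_assoc]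
  exact Finset.sum_comm

lemma crown_gen (m₀ : ℕ) (n : ℕ → ℕ)
    (W : (k : ℕ) → Matrix (Fin (n (k + 1))) (Fin (n k)) ℝ)
    (b : (k : ℕ) → Fin (n (k + 1)) → ℝ)
    (σ : ℝ → ℝ)
    (Φ : (k : ℕ) → (Fin (n 0) → ℝ) → (Fin (n k) → ℝ))
    (hΦ0 : ∀ x, Φ 0 x = x)
    (hΦ : ∀ k, k + 1 ≤ m₀ → ∀ x,
      Φ (k + 1) x = fun r => σ (((W k).mulVec (Φ k x) + b k) r))
    (f : (Fin (n 0) → ℝ) → (Fin (n (m₀ + 1)) → ℝ))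
    (hf : ∀ x, f x = (W m₀).mulVec (Φ m₀ x) + b m₀)
    (l u : (k : ℕ) → Fin (n k) → ℝ)
    (x : Fin (n 0) → ℝ)
    (hpre' : ∀ k, k + 1 ≤ m₀ → ∀ r : Fin (n (k + 1)),
      l (k + 1) r ≤ ((W k).mulVec (Φ k x) + b k) r ∧
        ((W k).mulVec (Φ k x) + b k) r ≤ u (k + 1) r)
    (Λ Δ : (k : ℕ) → Fin (n k) → ℝ)
    (hΔtop : ∀ i, Δ (m₀ + 1) i = 0)
    (hrec0 : ∀ i, Λ 0 i = ∑ r, Λ 1 r * W 0 r i)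
    (hkey : ∀ k, 1 ≤ k → k ≤ m₀ → ∀ i : Fin (n k), ∀ yv : ℝ,
      l k i ≤ yv → yv ≤ u k i →
      (∑ r, Λ (k + 1) r * W k r i) * σ yv ≤ Λ k i * (yv + Δ k i)) :
    ∑ i, Λ (m₀ + 1) i * f x i ≤ (∑ i, Λ 0 i * x i) +
      ∑ k ∈ Finset.range (m₀ + 1), ∑ i, Λ (k + 1) i * (b k i + Δ (k + 1) i) := by
  have main : ∀ d k, k + d = m₀ →
      ∑ i, Λ (m₀ + 1) i * f x i ≤
        (∑ r, Λ (k + 1) r * (((W k).mulVec (Φ k x) + b k) r + Δ (k + 1) r)) +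
        ∑ k' ∈ Finset.Ico (k + 1) (m₀ + 1), ∑ i, Λ (k' + 1) i * (b k' i + Δ (k' + 1) i) := by
    intro d
    induction d with
    | zero =>
      intro k hk
      have : k = m₀ := by omega
      subst this
      rw [hf x]
      simp [hΔtop, Finset.Ico_self]
    | succ d ih =>
      intro k hk
      have hkm : k + 1 ≤ m₀ := by omega
      have h2 := ih (k + 1) (by omega)
      refine h2.trans ?_
      have e1 : ∑ r, Λ (k + 1 + 1) r *
            (((W (k + 1)).mulVec (Φ (k + 1) x) + b (k + 1)) r + Δ (k + 1 + 1) r)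
          = (∑ i, (∑ r, Λ (k + 1 + 1) r * W (k + 1) r i) * Φ (k + 1) x i)
            + ∑ r, Λ (k + 1 + 1) r * (b (k + 1) r + Δ (k + 1 + 1) r) := by
        rw [← crown_sum_mulVec, ← Finset.sum_add_distrib]
        refine Finset.sum_congr rfl fun r _ => ?_
        simp only [Pi.add_apply]; ring
      have e2 : ∑ i, (∑ r, Λ (k + 1 + 1) r * W (k + 1) r i) * Φ (k + 1) x i
          ≤ ∑ i, Λ (k + 1) i * (((W k).mulVec (Φ k x) + b k) i + Δ (k + 1) i) := by
        refine Finset.sum_le_sum fun i _ => ?_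
        have hy := hpre' k hkm i
        have hΦe : Φ (k + 1) x i = σ (((W k).mulVec (Φ k x) + b k) i) := by
          rw [hΦ k hkm x]
        rw [hΦe]
        exact hkey (k + 1) (by omega) hkm i _ hy.1 hy.2
      have e3 : ∑ k' ∈ Finset.Ico (k + 1) (m₀ + 1),
            ∑ i, Λ (k' + 1) i * (b k' i + Δ (k' + 1) i)
          = (∑ i, Λ (k + 1 + 1) i * (b (k + 1) i + Δ (k + 1 + 1) i))
            + ∑ k' ∈ Finset.Ico (k + 1 + 1) (m₀ + 1),
                ∑ i, Λ (k' + 1) i * (b k' i + Δ (k' + 1) i) :=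
        Finset.sum_eq_sum_Ico_succ_bot (by omega) _
      rw [e1, e3]
      linarith
  have h0 := main m₀ 0 (by omega)
  refine h0.trans ?_
  rw [hΦ0 x]
  have e1 : ∑ r, Λ (0 + 1) r * (((W 0).mulVec x + b 0) r + Δ (0 + 1) r)
      = (∑ i, (∑ r, Λ (0 + 1) r * W 0 r i) * x i)
        + ∑ r, Λ (0 + 1) r * (b 0 r + Δ (0 + 1) r) := by
    rw [← crown_sum_mulVec, ← Finset.sum_add_distrib]
    refine Finset.sum_congr rfl fun r _ => ?_
    simp only [Pi.add_apply]; ring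
  have e2 : ∑ i, (∑ r, Λ (0 + 1) r * W 0 r i) * x i = ∑ i, Λ 0 i * x i :=
    Finset.sum_congr rfl fun i _ => by rw [← hrec0]
  have e3 : ∑ k ∈ Finset.range (m₀ + 1), ∑ i, Λ (k + 1) i * (b k i + Δ (k + 1) i)
      = (∑ i, Λ (0 + 1) i * (b 0 i + Δ (0 + 1) i))
        + ∑ k' ∈ Finset.Ico (0 + 1) (m₀ + 1),
            ∑ i, Λ (k' + 1) i * (b k' i + Δ (k' + 1) i) := by
    rw [Finset.range_eq_Ico]
    exact Finset.sum_eq_sum_Ico_succ_bot (by omega) _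
  rw [e1, e2, e3]
  linarith

/-- **CROWN explicit output bounds (Theorem 3.1).**
We consider an `m`-layer network with `m = m₀ + 1 ≥ 1`.  Layer sizes are `n 0, …, n m`;
`W k : ℝ^{n (k+1) × n k}` and `b k : ℝ^{n (k+1)}` are the weight matrix and bias of
(paper-)layer `k + 1`, so that `Φ 0 x = x`, `Φ (k+1) x = σ (W k (Φ k x) + b k)` for the hidden
layers `k + 1 ≤ m₀`, and `f x = W m₀ (Φ m₀ x) + b m₀`.

For every hidden layer `k + 1 ∈ {1, …, m₀}` and neuron `r` we are given pre-activation bounds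
`l (k+1) r ≤ (W k (Φ k x) + b k) r ≤ u (k+1) r` valid on the `ℓ_p` ball of radius `ε` around
`x₀`, and nonnegative slopes `αU, αL` and intercepts `βU, βL` with
`αL (y + βL) ≤ σ y ≤ αU (y + βU)` on `[l, u]`.

The row vectors `Λ k` (resp. `Ω k`) and intercept columns `Δ k` (resp. `Θ k`) are produced by
the sign-based backward recursion of Theorem 3.1, starting from the standard unit vector `e j`
at the output layer.  Then for every `x` in the `ℓ_p` ball,
`Ω 0 ⋅ x + Σ_{k=1}^{m} Ω k ⋅ (b^{(k)} + Θ k) ≤ f_j x ≤ Λ 0 ⋅ x + Σ_{k=1}^{m} Λ k ⋅ (b^{(k)} + Δ k)`. -/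
theorem crown_explicit_output_bounds (m₀ : ℕ) (n : ℕ → ℕ)
    (W : (k : ℕ) → Matrix (Fin (n (k + 1))) (Fin (n k)) ℝ)
    (b : (k : ℕ) → Fin (n (k + 1)) → ℝ)
    (σ : ℝ → ℝ)
    -- the network
    (Φ : (k : ℕ) → (Fin (n 0) → ℝ) → (Fin (n k) → ℝ))
    (hΦ0 : ∀ x, Φ 0 x = x)
    (hΦ : ∀ k, k + 1 ≤ m₀ → ∀ x,
      Φ (k + 1) x = fun r => σ (((W k).mulVec (Φ k x) + b k) r))
    (f : (Fin (n 0) → ℝ) → (Fin (n (m₀ + 1)) → ℝ))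
    (hf : ∀ x, f x = (W m₀).mulVec (Φ m₀ x) + b m₀)
    -- the perturbation ball
    (p : ℝ≥0∞) (hp : 1 ≤ p) (x₀ : Fin (n 0) → ℝ) (ε : ℝ) (hε : 0 < ε)
    -- pre-activation bounds for hidden layers k+1 ∈ {1, …, m₀}
    (l u : (k : ℕ) → Fin (n k) → ℝ)
    (hlu : ∀ k, k + 1 ≤ m₀ → ∀ r : Fin (n (k + 1)), l (k + 1) r ≤ u (k + 1) r)
    (hpre : ∀ k, k + 1 ≤ m₀ → ∀ r : Fin (n (k + 1)), ∀ x : Fin (n 0) → ℝ,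
      ‖(WithLp.equiv p (Fin (n 0) → ℝ)).symm (x - x₀)‖ ≤ ε →
      l (k + 1) r ≤ ((W k).mulVec (Φ k x) + b k) r ∧
        ((W k).mulVec (Φ k x) + b k) r ≤ u (k + 1) r)
    -- linear bounds on the activation function for hidden layers k+1 ∈ {1, …, m₀}
    (αU αL βU βL : (k : ℕ) → Fin (n k) → ℝ)
    (hαU : ∀ k, k + 1 ≤ m₀ → ∀ r : Fin (n (k + 1)), 0 ≤ αU (k + 1) r)
    (hαL : ∀ k, k + 1 ≤ m₀ → ∀ r : Fin (n (k + 1)), 0 ≤ αL (k + 1) r)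
    (hσbound : ∀ k, k + 1 ≤ m₀ → ∀ r : Fin (n (k + 1)),
      ∀ y ∈ Set.Icc (l (k + 1) r) (u (k + 1) r),
      αL (k + 1) r * (y + βL (k + 1) r) ≤ σ y ∧ σ y ≤ αU (k + 1) r * (y + βU (k + 1) r))
    -- the output coordinate
    (j : Fin (n (m₀ + 1)))
    -- the backward recursion for the upper bound
    (Λ Δ : (k : ℕ) → Fin (n k) → ℝ)
    (hΛtop : ∀ i, Λ (m₀ + 1) i = if i = j then 1 else 0)
    (hΛ : ∀ k, k ≤ m₀ → ∀ i : Fin (n k),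
      Λ k i = (∑ r, Λ (k + 1) r * W k r i) *
        (if k = 0 then 1
         else if 0 ≤ ∑ r, Λ (k + 1) r * W k r i then αU k i else αL k i))
    (hΔtop : ∀ i, Δ (m₀ + 1) i = 0)
    (hΔ : ∀ k, 1 ≤ k → k ≤ m₀ → ∀ i : Fin (n k),
      Δ k i = if 0 ≤ ∑ r, Λ (k + 1) r * W k r i then βU k i else βL k i)
    -- the backward recursion for the lower bound
    (Ω Θ : (k : ℕ) → Fin (n k) → ℝ)
    (hΩtop : ∀ i, Ω (m₀ + 1) i = if i = j then 1 else 0)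
    (hΩ : ∀ k, k ≤ m₀ → ∀ i : Fin (n k),
      Ω k i = (∑ r, Ω (k + 1) r * W k r i) *
        (if k = 0 then 1
         else if 0 ≤ ∑ r, Ω (k + 1) r * W k r i then αL k i else αU k i))
    (hΘtop : ∀ i, Θ (m₀ + 1) i = 0)
    (hΘ : ∀ k, 1 ≤ k → k ≤ m₀ → ∀ i : Fin (n k),
      Θ k i = if 0 ≤ ∑ r, Ω (k + 1) r * W k r i then βL k i else βU k i) :
    ∀ x : Fin (n 0) → ℝ, ‖(WithLp.equiv p (Fin (n 0) → ℝ)).symm (x - x₀)‖ ≤ ε →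
      (∑ i, Ω 0 i * x i) +
          (∑ k ∈ Finset.range (m₀ + 1), ∑ i, Ω (k + 1) i * (b k i + Θ (k + 1) i)) ≤ f x j ∧
      f x j ≤ (∑ i, Λ 0 i * x i) +
          (∑ k ∈ Finset.range (m₀ + 1), ∑ i, Λ (k + 1) i * (b k i + Δ (k + 1) i)) := by
  
  intro x hx
  have hpre' : ∀ k, k + 1 ≤ m₀ → ∀ r : Fin (n (k + 1)),
      l (k + 1) r ≤ ((W k).mulVec (Φ k x) + b k) r ∧
        ((W k).mulVec (Φ k x) + b k) r ≤ u (k + 1) r :=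
    fun k hk r => hpre k hk r x hx
  constructor
  · -- lower bound, via crown_gen applied to -Ω
    have hrecΩ0 : ∀ i, -(Ω 0 i) = ∑ r, -(Ω 1 r) * W 0 r i := by
      intro i
      rw [hΩ 0 (Nat.zero_le _) i]
      simp [neg_mul, Finset.sum_neg_distrib]
    have hkeyΩ : ∀ k, 1 ≤ k → k ≤ m₀ → ∀ i : Fin (n k), ∀ yv : ℝ,
        l k i ≤ yv → yv ≤ u k i →
        (∑ r, -(Ω (k + 1) r) * W k r i) * σ yv ≤ -(Ω k i) * (yv + Θ k i) := by
      intro k hk1 hk2 i yv h1 h2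
      obtain ⟨k', rfl⟩ : ∃ k', k = k' + 1 := ⟨k - 1, by omega⟩
      have hσ2 := hσbound k' hk2 i yv ⟨h1, h2⟩
      rw [hΩ (k' + 1) hk2 i, hΘ (k' + 1) (by omega) hk2 i]
      set c := ∑ r, Ω (k' + 1 + 1) r * W (k' + 1) r i with hc
      have hnc : ∑ r, -(Ω (k' + 1 + 1) r) * W (k' + 1) r i = -c := by
        rw [hc]
        simp only [neg_mul]
        exact Finset.sum_neg_distrib (f := fun r => Ω (k' + 1 + 1) r * W (k' + 1) r i)
      rw [hnc]
      simp only [Nat.succ_ne_zero, if_false]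
      by_cases hcs : 0 ≤ c
      · simp only [if_pos hcs]
        have h3 : 0 ≤ c * (σ yv - αL (k' + 1) i * (yv + βL (k' + 1) i)) :=
          mul_nonneg hcs (by linarith [hσ2.1])
        nlinarith [h3]
      · simp only [if_neg hcs]
        push_neg at hcs
        have h3 : 0 ≤ (-c) * (αU (k' + 1) i * (yv + βU (k' + 1) i) - σ yv) :=
          mul_nonneg (by linarith) (by linarith [hσ2.2])
        nlinarith [h3]
    have hlow := crown_gen m₀ n W b σ Φ hΦ0 hΦ f hf l u x hpre'
      (fun k i => -(Ω k i)) Θ hΘtop hrecΩ0 hkeyΩ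
    simp only [hΩtop, ite_mul, one_mul, zero_mul, neg_mul, neg_neg] at hlow
    simp only [Finset.sum_neg_distrib, Finset.sum_ite_eq', Finset.mem_univ,
      if_pos] at hlow
    linarith [hlow]
  · -- upper bound
    have hrecΛ0 : ∀ i, Λ 0 i = ∑ r, Λ 1 r * W 0 r i := by
      intro i
      rw [hΛ 0 (Nat.zero_le _) i]
      simp
    have hkeyΛ : ∀ k, 1 ≤ k → k ≤ m₀ → ∀ i : Fin (n k), ∀ yv : ℝ,
        l k i ≤ yv → yv ≤ u k i →
        (∑ r, Λ (k + 1) r * W k r i) * σ yv ≤ Λ k i * (yv + Δ k i) := by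
      intro k hk1 hk2 i yv h1 h2
      obtain ⟨k', rfl⟩ : ∃ k', k = k' + 1 := ⟨k - 1, by omega⟩
      have hσ2 := hσbound k' hk2 i yv ⟨h1, h2⟩
      rw [hΛ (k' + 1) hk2 i, hΔ (k' + 1) (by omega) hk2 i]
      set c := ∑ r, Λ (k' + 1 + 1) r * W (k' + 1) r i with hc
      simp only [Nat.succ_ne_zero, if_false]
      by_cases hcs : 0 ≤ c
      · simp only [if_pos hcs]
        have h3 : 0 ≤ c * (αU (k' + 1) i * (yv + βU (k' + 1) i) - σ yv) :=
          mul_nonneg hcs (by linarith [hσ2.2])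
        nlinarith [h3]
      · simp only [if_neg hcs]
        push_neg at hcs
        have h3 : 0 ≤ (-c) * (σ yv - αL (k' + 1) i * (yv + βL (k' + 1) i)) :=
          mul_nonneg (by linarith) (by linarith [hσ2.1])
        nlinarith [h3]
    have hup := crown_gen m₀ n W b σ Φ hΦ0 hΦ f hf l u x hpre'
      Λ Δ hΔtop hrecΛ0 hkeyΛ
    simp only [hΛtop, ite_mul, one_mul, zero_mul, Finset.sum_ite_eq',
      Finset.mem_univ, if_pos] at hup
    exact hup
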